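/- Let (Ω, 𝓕, P) be a probability space, 𝓖 ⊆ 𝓕 and 𝓖_W ⊆ 𝓖 sub-σ-algebras, φ a square-integrable 𝓖-measurable real random variable with E[φ] = 0, and g a version of E[φ | 𝓖_W]. Let R : Ω → {0,1} with E[R] = ρ ∈ (0,1) and σ(R) independent of 𝓖, and set φ_SSL := g + (R/ρ)(φ − g). Then ρ·Var(φ_SSL) ≤ Var(φ), with equality if and only if g = 0 almost surely. -/

import Mathlib

open MeasureTheory ProbabilityTheory

private lemma ssl_integrable_mul {Ω : Type*} [MeasurableSpace Ω]
    {P : Measure Ω} {f g : Ω → ℝ} (hf : MemLp f 2 P) (hg : MemLp g 2 P) :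
    Integrable (fun ω => f ω * g ω) P := by
  have h1 : Integrable (fun ω => (f ω + g ω) ^ 2) P := by
    simpa using (hf.add hg).integrable_sq
  have h2 := hf.integrable_sq
  have h3 := hg.integrable_sq
  have h4 : Integrable (fun ω => ((f ω + g ω) ^ 2 - f ω ^ 2 - g ω ^ 2) / 2) P :=
    ((h1.sub h2).sub h3).div_const 2
  exact h4.congr (Filter.Eventually.of_forall fun ω => by ring)

private lemma ssl_memℒp_two_condexp {Ω : Type*} {m : MeasurableSpace Ω} [mF : MeasurableSpace Ω]
    (P : Measure Ω) [IsProbabilityMeasure P] (hm : m ≤ mF)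
    {φ : Ω → ℝ} (hφ : MemLp φ 2 P) : MemLp (P[φ|m]) 2 P := by
  set f : Lp ℝ 2 P := hφ.toLp φ with hf
  have hGmem : MemLp ((condExpL2 ℝ ℝ hm f : Lp ℝ 2 P) : Ω → ℝ) 2 P := Lp.memLp _
  have hint : Integrable ((condExpL2 ℝ ℝ hm f : Lp ℝ 2 P) : Ω → ℝ) P :=
    hGmem.integrable one_le_two
  have hae : ((condExpL2 ℝ ℝ hm f : Lp ℝ 2 P) : Ω → ℝ) =ᵐ[P] P[φ|m] := by
    refine ae_eq_condExp_of_forall_setIntegral_eq hm (hφ.integrable one_le_two)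
      (fun s _ _ => hint.integrableOn)
      (fun s hs hμs => ?_) (aestronglyMeasurable_condExpL2 hm f)
    rw [integral_condExpL2_eq hm f hs hμs.ne]
    exact integral_congr_ae (ae_restrict_of_ae (hφ.coeFn_toLp))
  exact hGmem.ae_eq hae

/-- **The semi-supervised estimator is never less efficient than the supervised one.**
For `𝓖W ⊆ 𝓖 ⊆ 𝓕`, square-integrable `𝓖`-measurable `φ` with `E[φ] = 0`, `g` a version of
`E[φ ∣ 𝓖W]`, and an MCAR labeling indicator `R ∈ {0,1}` with `E[R] = ρ ∈ (0,1)` and `σ(R)`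
independent of `𝓖`, the influence function `φ_SSL = g + (R/ρ)(φ − g)` satisfies
`ρ·Var(φ_SSL) ≤ Var(φ)`, with equality iff `g = 0` a.s. -/
theorem ssl_never_less_efficient
    {Ω : Type*} (𝓖 𝓖W : MeasurableSpace Ω) [mF : MeasurableSpace Ω]
    (P : Measure Ω) [IsProbabilityMeasure P]
    (h𝓖 : 𝓖 ≤ mF) (h𝓖W : 𝓖W ≤ 𝓖)
    (φ g : Ω → ℝ)
    (hφmeas : Measurable[𝓖] φ) (hφL2 : MemLp φ 2 P)
    (hφmean : ∫ ω, φ ω ∂P = 0)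
    (hgmeas : Measurable[𝓖W] g) (hg : g =ᵐ[P] P[φ|𝓖W])
    (ρ : ℝ) (hρ : ρ ∈ Set.Ioo (0 : ℝ) 1)
    (R : Ω → ℝ) (hRmeas : Measurable R) (hRbin : ∀ ω, R ω = 0 ∨ R ω = 1)
    (hRmean : ∫ ω, R ω ∂P = ρ)
    (hindep : Indep (MeasurableSpace.comap R inferInstance) 𝓖 P) :
    ρ * variance (fun ω => g ω + (R ω / ρ) * (φ ω - g ω)) P ≤ variance φ P ∧
    (ρ * variance (fun ω => g ω + (R ω / ρ) * (φ ω - g ω)) P = variance φ P ↔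
      g =ᵐ[P] (fun _ => (0 : ℝ))) := by
  obtain ⟨hρ0, hρ1⟩ := hρ
  have hρne : ρ ≠ 0 := ne_of_gt hρ0
  have hmW : 𝓖W ≤ mF := h𝓖W.trans h𝓖
  have hφm : Measurable φ := hφmeas.mono h𝓖 le_rfl
  have hgm𝓖 : Measurable[𝓖] g := hgmeas.mono h𝓖W le_rfl
  have hgm : Measurable g := hgm𝓖.mono h𝓖 le_rfl
  have hgL2 : MemLp g 2 P := (ssl_memℒp_two_condexp P hmW hφL2).ae_eq hg.symm
  set h : Ω → ℝ := fun ω => φ ω - g ω with hh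
  have hhL2 : MemLp h 2 P := hφL2.sub hgL2
  have hhm𝓖 : Measurable[𝓖] h := hφmeas.sub hgm𝓖
  have hhm : Measurable h := hφm.sub hgm
  have hφint : Integrable φ P := hφL2.integrable one_le_two
  have hgint : Integrable g P := hgL2.integrable one_le_two
  have hhint : Integrable h P := hhL2.integrable one_le_two
  -- means
  have hgmean : ∫ ω, g ω ∂P = 0 := by
    rw [integral_congr_ae hg, integral_condExp hmW, hφmean]
  have hhmean : ∫ ω, h ω ∂P = 0 := by
    rw [hh, integral_sub hφint hgint, hφmean, hgmean, sub_zero]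
  -- conditional expectation of h is zero
  have hcondg : P[g|𝓖W] =ᵐ[P] g := by
    rw [condExp_of_stronglyMeasurable hmW hgmeas.stronglyMeasurable hgint]
  have hcondh : P[h|𝓖W] =ᵐ[P] (fun _ => (0 : ℝ)) := by
    have h1 : P[h|𝓖W] =ᵐ[P] P[φ|𝓖W] - P[g|𝓖W] := condExp_sub hφint hgint 𝓖W
    filter_upwards [h1, hcondg, hg] with ω h1ω h2ω h3ω
    simp only [h1ω, Pi.sub_apply, h2ω, h3ω.symm, sub_self]
  -- orthogonality : ∫ g·h = 0
  have hghint : Integrable (fun ω => g ω * h ω) P := ssl_integrable_mul hgL2 hhL2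
  have hgh : ∫ ω, g ω * h ω ∂P = 0 := by
    have hmul : P[g * h|𝓖W] =ᵐ[P] g * P[h|𝓖W] :=
      condExp_mul_of_stronglyMeasurable_left hgmeas.stronglyMeasurable hghint hhint
    have hz : P[g * h|𝓖W] =ᵐ[P] (fun _ => (0 : ℝ)) := by
      filter_upwards [hmul, hcondh] with ω h1ω h2ω
      simp [h1ω, h2ω]
    calc ∫ ω, g ω * h ω ∂P = ∫ ω, (P[g * h|𝓖W]) ω ∂P := (integral_condExp hmW).symm
      _ = ∫ _ω, (0 : ℝ) ∂P := integral_congr_ae hz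
      _ = 0 := by simp
  -- independence tool
  have key : ∀ (X : Ω → ℝ), Measurable[𝓖] X →
      ∫ ω, R ω * X ω ∂P = ρ * ∫ ω, X ω ∂P := by
    intro X hX
    have hIF : IndepFun R X P := by
      rw [IndepFun_iff_Indep]
      exact indep_of_indep_of_le_right hindep hX.comap_le
    have hmain := hIF.integral_mul_eq_mul_integral hRmeas.aestronglyMeasurable
      ((hX.mono h𝓖 le_rfl).aestronglyMeasurable)
    calc ∫ ω, R ω * X ω ∂P = ∫ ω, (R * X) ω ∂P := rfl
      _ = (∫ ω, R ω ∂P) * ∫ ω, X ω ∂P := hmain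
      _ = ρ * ∫ ω, X ω ∂P := by rw [hRmean]
  have hRbdd : ∃ C, ∀ ω, ‖R ω‖ ≤ C := by
    refine ⟨1, fun ω => ?_⟩
    rcases hRbin ω with hr | hr <;> simp [hr]
  -- key integrals
  have hAint : Integrable (fun ω => g ω * g ω) P := ssl_integrable_mul hgL2 hgL2
  have hCint' : Integrable (fun ω => h ω * h ω) P := ssl_integrable_mul hhL2 hhL2
  have hBint : Integrable (fun ω => R ω * (g ω * h ω)) P :=
    hghint.bdd_mul hRmeas.aestronglyMeasurable (Filter.Eventually.of_forall hRbdd.choose_spec)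
  have hCint : Integrable (fun ω => R ω * (h ω * h ω)) P :=
    hCint'.bdd_mul hRmeas.aestronglyMeasurable (Filter.Eventually.of_forall hRbdd.choose_spec)
  have hB : ∫ ω, R ω * (g ω * h ω) ∂P = 0 := by
    rw [key (fun ω => g ω * h ω) (hgm𝓖.mul hhm𝓖), hgh, mul_zero]
  have hC : ∫ ω, R ω * (h ω * h ω) ∂P = ρ * ∫ ω, h ω * h ω ∂P :=
    key _ (hhm𝓖.mul hhm𝓖)
  have hRh : ∫ ω, R ω * h ω ∂P = 0 := by
    rw [key _ hhm𝓖, hhmean, mul_zero]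
  -- the SSL influence function
  set S : Ω → ℝ := fun ω => g ω + (R ω / ρ) * h ω with hS
  have hSeq : (fun ω => g ω + (R ω / ρ) * (φ ω - g ω)) = S := rfl
  have hpart2L2 : MemLp (fun ω => (R ω / ρ) * h ω) 2 P := by
    refine MemLp.of_le (hhL2.const_mul ρ⁻¹)
      (((hRmeas.div_const ρ).mul hhm).aestronglyMeasurable) ?_
    refine Filter.Eventually.of_forall fun ω => ?_
    rcases hRbin ω with hr | hr
    · simpa [hr] using norm_nonneg (ρ⁻¹ * h ω)
    · simp [hr, one_div]
  have hSL2 : MemLp S 2 P := hgL2.add hpart2L2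
  have hpart2int : Integrable (fun ω => (R ω / ρ) * h ω) P := hpart2L2.integrable one_le_two
  have hSmean : ∫ ω, S ω ∂P = 0 := by
    rw [hS, integral_add hgint hpart2int, hgmean]
    have heq : (fun ω => (R ω / ρ) * h ω) = fun ω => ρ⁻¹ * (R ω * h ω) := by
      funext ω; ring
    rw [heq, integral_const_mul, hRh, mul_zero, add_zero]
  -- expand S²
  have hSsq : ∀ ω, S ω ^ 2 = g ω * g ω + (2 / ρ) * (R ω * (g ω * h ω))
      + (1 / ρ ^ 2) * (R ω * (h ω * h ω)) := by
    intro ω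
    rcases hRbin ω with hr | hr <;> simp only [hS, hr] <;> ring
  have hB2int : Integrable (fun ω => (2 / ρ) * (R ω * (g ω * h ω))) P := hBint.const_mul _
  have hC2int : Integrable (fun ω => (1 / ρ ^ 2) * (R ω * (h ω * h ω))) P := hCint.const_mul _
  have hSsqint : ∫ ω, S ω ^ 2 ∂P
      = (∫ ω, g ω * g ω ∂P) + (2 / ρ) * (∫ ω, R ω * (g ω * h ω) ∂P)
        + (1 / ρ ^ 2) * ∫ ω, R ω * (h ω * h ω) ∂P := by
    calc ∫ ω, S ω ^ 2 ∂P
        = ∫ ω, (g ω * g ω + (2 / ρ) * (R ω * (g ω * h ω))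
            + (1 / ρ ^ 2) * (R ω * (h ω * h ω))) ∂P :=
          integral_congr_ae (Filter.Eventually.of_forall hSsq)
      _ = (∫ ω, (g ω * g ω + (2 / ρ) * (R ω * (g ω * h ω))) ∂P)
            + ∫ ω, (1 / ρ ^ 2) * (R ω * (h ω * h ω)) ∂P :=
          integral_add (hAint.add hB2int) hC2int
      _ = ((∫ ω, g ω * g ω ∂P) + ∫ ω, (2 / ρ) * (R ω * (g ω * h ω)) ∂P)
            + ∫ ω, (1 / ρ ^ 2) * (R ω * (h ω * h ω)) ∂P := by
          rw [integral_add hAint hB2int]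
      _ = (∫ ω, g ω * g ω ∂P) + (2 / ρ) * (∫ ω, R ω * (g ω * h ω) ∂P)
            + (1 / ρ ^ 2) * ∫ ω, R ω * (h ω * h ω) ∂P := by
          rw [integral_const_mul, integral_const_mul]
  have hvarS : variance S P
      = (∫ ω, g ω * g ω ∂P) + (1 / ρ) * ∫ ω, h ω * h ω ∂P := by
    have h0 : variance S P = (∫ ω, S ω ^ 2 ∂P) - (∫ ω, S ω ∂P) ^ 2 := variance_eq_sub hSL2
    rw [h0, hSmean, hSsqint, hB, hC]
    field_simp
    ring
  have hvarφ : variance φ P = (∫ ω, g ω * g ω ∂P) + ∫ ω, h ω * h ω ∂P := by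
    have h0 : variance φ P = (∫ ω, φ ω ^ 2 ∂P) - (∫ ω, φ ω ∂P) ^ 2 := variance_eq_sub hφL2
    rw [h0, hφmean]
    have hφeq : ∀ ω, φ ω ^ 2 = g ω * g ω + 2 * (g ω * h ω) + h ω * h ω := by
      intro ω; simp only [hh]; ring
    have hGHint : Integrable (fun ω => 2 * (g ω * h ω)) P := hghint.const_mul _
    have hsq : ∫ ω, φ ω ^ 2 ∂P
        = (∫ ω, g ω * g ω ∂P) + 2 * (∫ ω, g ω * h ω ∂P) + ∫ ω, h ω * h ω ∂P := by
      calc ∫ ω, φ ω ^ 2 ∂P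
          = ∫ ω, (g ω * g ω + 2 * (g ω * h ω) + h ω * h ω) ∂P :=
            integral_congr_ae (Filter.Eventually.of_forall hφeq)
        _ = (∫ ω, (g ω * g ω + 2 * (g ω * h ω)) ∂P) + ∫ ω, h ω * h ω ∂P :=
            integral_add (hAint.add hGHint) hCint'
        _ = ((∫ ω, g ω * g ω ∂P) + ∫ ω, 2 * (g ω * h ω) ∂P) + ∫ ω, h ω * h ω ∂P := by
            rw [integral_add hAint hGHint]
        _ = (∫ ω, g ω * g ω ∂P) + 2 * (∫ ω, g ω * h ω ∂P) + ∫ ω, h ω * h ω ∂P := by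
            rw [integral_const_mul]
    rw [hsq, hgh]
    ring
  have hanneg : (0 : ℝ) ≤ ∫ ω, g ω * g ω ∂P := integral_nonneg fun ω => mul_self_nonneg _
  have hρvarS : ρ * variance S P = ρ * (∫ ω, g ω * g ω ∂P) + ∫ ω, h ω * h ω ∂P := by
    rw [hvarS]
    field_simp
  constructor
  · rw [hρvarS, hvarφ]
    nlinarith
  · rw [hρvarS, hvarφ]
    have hiff : ρ * (∫ ω, g ω * g ω ∂P) + (∫ ω, h ω * h ω ∂P)
        = (∫ ω, g ω * g ω ∂P) + (∫ ω, h ω * h ω ∂P) ↔ (∫ ω, g ω * g ω ∂P) = 0 := by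
      constructor
      · intro heq
        have h10 : (1 - ρ) * (∫ ω, g ω * g ω ∂P) = 0 := by linarith
        rcases mul_eq_zero.1 h10 with h1 | h2
        · exact absurd h1 (by intro hc; linarith)
        · exact h2
      · intro h0; rw [h0]; ring
    rw [hiff, integral_eq_zero_iff_of_nonneg (fun ω => mul_self_nonneg (g ω)) hAint]
    constructor
    · intro h0
      filter_upwards [h0] with ω hω
      exact mul_self_eq_zero.1 hω
    · intro h0
      filter_upwards [h0] with ω hω
      simp [hω]
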